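/- For all integers n ≥ 10 and all p, q ∈ {1,...,9} with p < q, we have P(p,n) > P(q,n), where P(d,n) = (1/n)·Σ_{i=1}^{n} c_d(i)/i and c_d(i) is the number of integers in {1,...,i} with decimal leading digit d. -/

import Mathlib

open Finset

/-- The leading (first) decimal digit of a positive integer. -/
def leadingDigit (n : ℕ) : ℕ := n / 10 ^ (Nat.log 10 n)

/-- The number of integers in {1,...,i} whose decimal leading digit equals d. -/
def ldCount (d i : ℕ) : ℕ := ((Finset.Icc 1 i).filter (fun j => leadingDigit j = d)).card

/-- Probability that the leading digit is d when i is uniform on {1,...,n} and j uniform on {1,...,i}. -/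
noncomputable def P (d n : ℕ) : ℝ := (1 / (n : ℝ)) * ∑ i ∈ Finset.Icc 1 n, (ldCount d i : ℝ) / i

lemma leadingDigit_eq_of (d k j : ℕ) (hd1 : 1 ≤ d) (hd9 : d ≤ 9)
    (h1 : d * 10 ^ k ≤ j) (h2 : j < (d + 1) * 10 ^ k) :
    Nat.log 10 j = k ∧ leadingDigit j = d := by
  have hk : Nat.log 10 j = k := by
    apply Nat.log_eq_of_pow_le_of_lt_pow
    · calc 10 ^ k = 1 * 10 ^ k := (one_mul _).symm
      _ ≤ d * 10 ^ k := Nat.mul_le_mul_right _ hd1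
      _ ≤ j := h1
    · calc j < (d + 1) * 10 ^ k := h2
      _ ≤ 10 * 10 ^ k := Nat.mul_le_mul_right _ (by omega)
      _ = 10 ^ (k + 1) := by ring
  refine ⟨hk, ?_⟩
  unfold leadingDigit
  rw [hk]
  exact Nat.div_eq_of_lt_le h1 (by simpa using h2)

lemma leadingDigit_bounds (j : ℕ) (hj : 1 ≤ j) :
    1 ≤ leadingDigit j ∧ leadingDigit j ≤ 9 ∧
    leadingDigit j * 10 ^ (Nat.log 10 j) ≤ j ∧
    j < (leadingDigit j + 1) * 10 ^ (Nat.log 10 j) := by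
  have hT : 0 < 10 ^ (Nat.log 10 j) := Nat.pow_pos (by norm_num)
  have h1 : 10 ^ (Nat.log 10 j) ≤ j := Nat.pow_log_le_self 10 (by omega)
  have h2 : j < 10 ^ (Nat.log 10 j + 1) := Nat.lt_pow_succ_log_self (by norm_num) j
  have hdiv1 : 1 ≤ j / 10 ^ (Nat.log 10 j) := (Nat.one_le_div_iff hT).mpr h1
  have hdiv9 : j / 10 ^ (Nat.log 10 j) ≤ 9 := by
    have : j / 10 ^ (Nat.log 10 j) < 10 := by
      rw [Nat.div_lt_iff_lt_mul hT]
      calc j < 10 ^ (Nat.log 10 j + 1) := h2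
      _ = 10 * 10 ^ (Nat.log 10 j) := by ring
    omega
  refine ⟨hdiv1, hdiv9, Nat.div_mul_le_self _ _, ?_⟩
  unfold leadingDigit
  have hd := Nat.div_add_mod j (10 ^ (Nat.log 10 j))
  have hm := Nat.mod_lt j hT
  calc j = 10 ^ (Nat.log 10 j) * (j / 10 ^ (Nat.log 10 j)) + j % 10 ^ (Nat.log 10 j) := hd.symm
  _ < 10 ^ (Nat.log 10 j) * (j / 10 ^ (Nat.log 10 j)) + 10 ^ (Nat.log 10 j) := by omega
  _ = (j / 10 ^ (Nat.log 10 j) + 1) * 10 ^ (Nat.log 10 j) := by ring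

lemma leadingDigit_small (j : ℕ) (h1 : 1 ≤ j) (h9 : j ≤ 9) : leadingDigit j = j := by
  have : Nat.log 10 j = 0 := Nat.log_eq_zero_iff.mpr (Or.inl (by omega))
  simp [leadingDigit, this]

lemma ldCount_le (p q i : ℕ) (hp : 1 ≤ p) (hq9 : q ≤ 9) (hpq : p < q) :
    ldCount q i ≤ ldCount p i := by
  unfold ldCount
  apply Finset.card_le_card_of_injOn (fun j => j - (q - p) * 10 ^ (Nat.log 10 j))
  · intro j hj
    simp only [Finset.mem_coe, Finset.mem_filter, Finset.mem_Icc] at hj ⊢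
    obtain ⟨⟨hj1, hji⟩, hld⟩ := hj
    obtain ⟨_, _, hb1, hb2⟩ := leadingDigit_bounds j hj1
    rw [hld] at hb1 hb2
    set k := Nat.log 10 j with hk
    set T := 10 ^ k with hT
    have hTpos : 0 < T := Nat.pow_pos (by norm_num)
    have hsplit : q * T = p * T + (q - p) * T := by
      rw [← Nat.add_mul]; congr 1; omega
    have hq1 : (q + 1) * T = q * T + T := by ring
    have hp1 : (p + 1) * T = p * T + T := by ring
    have hTle : 1 * T ≤ p * T := Nat.mul_le_mul_right _ hp
    have hlo : p * T ≤ j - (q - p) * T := by omega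
    have hhi : j - (q - p) * T < (p + 1) * T := by omega
    refine ⟨⟨by omega, by omega⟩, ?_⟩
    exact (leadingDigit_eq_of p k _ hp (by omega) hlo hhi).2
  · intro j1 h1 j2 h2 heq
    simp only [Finset.coe_filter, Set.mem_setOf_eq, Finset.mem_Icc] at h1 h2
    obtain ⟨⟨h11, h12⟩, hld1⟩ := h1
    obtain ⟨⟨h21, h22⟩, hld2⟩ := h2
    obtain ⟨_, _, hb1, hb2⟩ := leadingDigit_bounds j1 h11
    obtain ⟨_, _, hb3, hb4⟩ := leadingDigit_bounds j2 h21
    rw [hld1] at hb1 hb2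
    rw [hld2] at hb3 hb4
    have key : ∀ (j k : ℕ), q * 10 ^ k ≤ j → j < (q + 1) * 10 ^ k →
        Nat.log 10 (j - (q - p) * 10 ^ k) = k ∧
        p * 10 ^ k ≤ j - (q - p) * 10 ^ k ∧ j - (q - p) * 10 ^ k < (p + 1) * 10 ^ k := by
      intro j k ha hb
      have hsplit : q * 10 ^ k = p * 10 ^ k + (q - p) * 10 ^ k := by
        rw [← Nat.add_mul]; congr 1; omega
      have hq1 : (q + 1) * 10 ^ k = q * 10 ^ k + 10 ^ k := by ring
      have hp1 : (p + 1) * 10 ^ k = p * 10 ^ k + 10 ^ k := by ring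
      have hlo : p * 10 ^ k ≤ j - (q - p) * 10 ^ k := by omega
      have hhi : j - (q - p) * 10 ^ k < (p + 1) * 10 ^ k := by omega
      exact ⟨(leadingDigit_eq_of p k _ hp (by omega) hlo hhi).1, hlo, hhi⟩
    obtain ⟨hk1, hlo1, _⟩ := key j1 (Nat.log 10 j1) hb1 hb2
    obtain ⟨hk2, hlo2, _⟩ := key j2 (Nat.log 10 j2) hb3 hb4
    simp only at heq
    have hkk : Nat.log 10 j1 = Nat.log 10 j2 := by rw [← hk1, ← hk2, heq]
    rw [hkk] at heq hb1
    have hle1 : (q - p) * 10 ^ (Nat.log 10 j2) ≤ j1 := by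
      calc (q - p) * 10 ^ (Nat.log 10 j2) ≤ q * 10 ^ (Nat.log 10 j2) :=
        Nat.mul_le_mul_right _ (by omega)
      _ ≤ j1 := hb1
    have hle2 : (q - p) * 10 ^ (Nat.log 10 j2) ≤ j2 := by
      calc (q - p) * 10 ^ (Nat.log 10 j2) ≤ q * 10 ^ (Nat.log 10 j2) :=
        Nat.mul_le_mul_right _ (by omega)
      _ ≤ j2 := hb3
    omega

lemma ldCount_strict (p q : ℕ) (hp : 1 ≤ p) (hq9 : q ≤ 9) (hpq : p < q) :
    ldCount q p < ldCount p p := by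
  have h1 : ldCount q p = 0 := by
    unfold ldCount
    rw [Finset.card_eq_zero, Finset.filter_eq_empty_iff]
    intro j hj
    simp only [Finset.mem_Icc] at hj
    rw [leadingDigit_small j hj.1 (by omega)]
    omega
  have h2 : 0 < ldCount p p := by
    unfold ldCount
    rw [Finset.card_pos]
    exact ⟨p, Finset.mem_filter.mpr ⟨Finset.mem_Icc.mpr ⟨hp, le_refl _⟩,
      leadingDigit_small p hp (by omega)⟩⟩
  omega

theorem P_strict_anti (n p q : ℕ) (hn : 10 ≤ n) (hp : p ∈ Finset.Icc 1 9)
    (hq : q ∈ Finset.Icc 1 9) (hpq : p < q) : P p n > P q n := by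
  simp only [Finset.mem_Icc] at hp hq
  have key : ∑ i ∈ Finset.Icc 1 n, (ldCount q i : ℝ) / i
      < ∑ i ∈ Finset.Icc 1 n, (ldCount p i : ℝ) / i := by
    apply Finset.sum_lt_sum
    · intro i hi
      simp only [Finset.mem_Icc] at hi
      have hipos : (0 : ℝ) < i := by exact_mod_cast hi.1
      apply div_le_div_of_nonneg_right ?_ hipos.le
      exact_mod_cast ldCount_le p q i hp.1 hq.2 hpq
    · refine ⟨p, Finset.mem_Icc.mpr ⟨hp.1, by omega⟩, ?_⟩
      have hppos : (0 : ℝ) < p := by exact_mod_cast hp.1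
      rw [div_lt_div_iff_of_pos_right hppos]
      exact_mod_cast ldCount_strict p q hp.1 hq.2 hpq
  have hn' : (0 : ℝ) < 1 / n := by positivity
  exact mul_lt_mul_of_pos_left key hn'
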